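/- Assume c_s, p_s ∈ C¹([0,R_s];ℝ) with c_s(R_s) = 1, p_s(R_s) = 1 and c_s'(R_s) > 0, and assume v_s ∈ C¹([0,R_s];ℝ) satisfies v_s(R_s) = 0 and v_s'(r) + ((n−1)/r)v_s(r) = g(c_s(r),p_s(r)) for 0 < r ≤ R_s. Define g*(r) = g(c_s(r),p_s(r)), g_p*(r) = K_M(c_s(r)), g_c*(r) = K_M'(c_s(r))p_s(r) − K_D'(c_s(r)), u₁(r) = R_s c_s'(r)/(r c_s'(R_s)), and v₁(r) = g_p*(r)p_s'(r) + c_s'(R_s)R_s^{−1} g_c*(r) r u₁(r). Then v₁(r) = (d/dr)g*(r) on (0,R_s], and consequently α̃₁(γ) := (1 − λ₁/(n−1))·(γ/R_s³) + g(1,1) − R_s^{−n} ∫₀^{R_s} ρ^n v₁(ρ) dρ = 0 for every γ, where λ₁ = n−1. (This is the identity α̃₁(γ) = 0 in (2.30), which expresses the translation invariance of the linearized problem in the mode k = 1.) -/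

import Mathlib

open Set Real intervalIntegral

/-- The identity `α̃₁(γ) = 0` of (2.30): `v₁ = (g*)'` on `(0,R_s]`, and consequently
`(1 − λ₁/(n−1))·(γ/R_s³) + g(1,1) − R_s^{−n} ∫₀^{R_s} ρ^n v₁(ρ) dρ = 0` for every `γ`. -/
theorem stmt_18
    (n : ℕ) (hn : 2 ≤ n) (Rs : ℝ) (hRs : 0 < Rs)
    (kB kD kP kQ : ℝ) (hkB : 0 < kB) (hkD : 0 < kD) (hkP : 0 < kP) (hkQ : 0 < kQ)
    (KB KD KM : ℝ → ℝ) (g : ℝ → ℝ → ℝ)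
    (hKB : KB = fun c => kB * c) (hKD : KD = fun c => kD * (1 - c))
    (hKM : KM = fun c => KB c + KD c)
    (hg : g = fun c p => KM c * p - KD c)
    (cs cs' ps ps' vs vs' : ℝ → ℝ)
    (hcs : ∀ r ∈ Icc (0:ℝ) Rs, HasDerivAt cs (cs' r) r)
    (hcs'cont : ContinuousOn cs' (Icc 0 Rs))
    (hps : ∀ r ∈ Icc (0:ℝ) Rs, HasDerivAt ps (ps' r) r)
    (hps'cont : ContinuousOn ps' (Icc 0 Rs))
    (hvs : ∀ r ∈ Icc (0:ℝ) Rs, HasDerivAt vs (vs' r) r)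
    (hvs'cont : ContinuousOn vs' (Icc 0 Rs))
    (hcsRs : cs Rs = 1) (hpsRs : ps Rs = 1) (hcs'Rs : 0 < cs' Rs) (hvsRs : vs Rs = 0)
    (hvsode : ∀ r ∈ Ioc (0:ℝ) Rs, vs' r + ((n - 1 : ℝ) / r) * vs r = g (cs r) (ps r))
    (gstar gpstar gcstar u₁ v₁ : ℝ → ℝ)
    (hgstar : gstar = fun r => g (cs r) (ps r))
    (hgpstar : gpstar = fun r => KM (cs r))
    (hgcstar : gcstar = fun r => (kB - kD) * ps r - (-kD))
    (hu₁ : u₁ = fun r => Rs * cs' r / (r * cs' Rs))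
    (hv₁ : v₁ = fun r => gpstar r * ps' r + cs' Rs * Rs⁻¹ * gcstar r * r * u₁ r) :
    (∀ r ∈ Ioc (0:ℝ) Rs, HasDerivAt gstar (v₁ r) r) ∧
    (∀ γ : ℝ,
      (1 - ((n : ℝ) - 1) / ((n : ℝ) - 1)) * (γ / Rs ^ 3) + g 1 1 -
        (∫ ρ in (0:ℝ)..Rs, ρ ^ n * v₁ ρ) / Rs ^ n = 0) := by
  obtain ⟨m, rfl⟩ : ∃ m, n = m + 2 := ⟨n - 2, by omega⟩
  have hRne : Rs ≠ 0 := hRs.ne'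
  have hc'ne : cs' Rs ≠ 0 := hcs'Rs.ne'
  subst hKB hKD hKM hg hgstar hgpstar hgcstar hu₁ hv₁
  set G : ℝ → ℝ := fun r => (kB * cs r + kD * (1 - cs r)) * ps r - kD * (1 - cs r) with hG
  set w : ℝ → ℝ := fun r =>
    (kB * cs r + kD * (1 - cs r)) * ps' r + ((kB - kD) * ps r + kD) * cs' r with hw
  have key : ∀ r ∈ Ioc (0:ℝ) Rs, HasDerivAt G (w r) r := by
    intro r hr
    have hrI : r ∈ Icc (0:ℝ) Rs := ⟨hr.1.le, hr.2⟩
    have h1 := hcs r hrI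
    have h2 := hps r hrI
    have d1 : HasDerivAt (fun x => kB * cs x + kD * (1 - cs x))
        (kB * cs' r + kD * (0 - cs' r)) r :=
      (h1.const_mul kB).add (((hasDerivAt_const r (1:ℝ)).sub h1).const_mul kD)
    have d2 : HasDerivAt (fun x => kD * (1 - cs x)) (kD * (0 - cs' r)) r :=
      ((hasDerivAt_const r (1:ℝ)).sub h1).const_mul kD
    have := (d1.mul h2).sub d2
    refine HasDerivAt.congr_deriv this ?_
    simp only [hw]
    ring
  constructor
  · intro r hr
    have hrne : r ≠ 0 := hr.1.ne'
    have hk := key r hr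
    have heq : w r = (kB * cs r + kD * (1 - cs r)) * ps' r +
        cs' Rs * Rs⁻¹ * ((kB - kD) * ps r - -kD) * r * (Rs * cs' r / (r * cs' Rs)) := by
      simp only [hw]
      field_simp
      ring
    rw [heq] at hk
    exact hk
  · intro γ
    -- continuity facts
    have hcsc : ContinuousOn cs (Icc 0 Rs) := fun r hr =>
      (hcs r hr).continuousAt.continuousWithinAt
    have hpsc : ContinuousOn ps (Icc 0 Rs) := fun r hr =>
      (hps r hr).continuousAt.continuousWithinAt
    have hvsc : ContinuousOn vs (Icc 0 Rs) := fun r hr =>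
      (hvs r hr).continuousAt.continuousWithinAt
    have hwc : ContinuousOn w (Icc 0 Rs) := by
      apply ContinuousOn.add
      · exact ((continuousOn_const.mul hcsc).add
          (continuousOn_const.mul (continuousOn_const.sub hcsc))).mul hps'cont
      · exact ((continuousOn_const.mul hpsc).add continuousOn_const).mul hcs'cont
    have hGc : ContinuousOn G (Icc 0 Rs) := by
      apply ContinuousOn.sub
      · exact ((continuousOn_const.mul hcsc).add
          (continuousOn_const.mul (continuousOn_const.sub hcsc))).mul hpsc
      · exact continuousOn_const.mul (continuousOn_const.sub hcsc)
    set h : ℝ → ℝ := fun ρ => ρ ^ (m + 2) * w ρ with hh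
    have hcong : (∫ ρ in (0:ℝ)..Rs, ρ ^ (m + 2) *
        ((fun r => (kB * cs r + kD * (1 - cs r)) * ps' r +
          cs' Rs * Rs⁻¹ * ((kB - kD) * ps r - -kD) * r * (Rs * cs' r / (r * cs' Rs))) ρ))
        = ∫ ρ in (0:ℝ)..Rs, h ρ := by
      apply intervalIntegral.integral_congr
      intro ρ hρ
      rw [uIcc_of_le hRs.le] at hρ
      by_cases h0 : ρ = 0
      · subst h0
        simp [hh, hw]
      · simp only [hh, hw]
        field_simp
        ring
    have hhc : ContinuousOn h (Icc 0 Rs) :=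
      (continuous_pow (m + 2)).continuousOn.mul hwc
    set F : ℝ → ℝ := fun ρ =>
      ρ ^ (m + 2) * G ρ - ((m + 2 : ℕ) : ℝ) * ρ ^ (m + 1) * vs ρ with hF
    have hFc : ContinuousOn F (Icc 0 Rs) := by
      apply ContinuousOn.sub
      · exact (continuous_pow (m + 2)).continuousOn.mul hGc
      · exact (continuousOn_const.mul (continuous_pow (m + 1)).continuousOn).mul hvsc
    have hFd : ∀ ρ ∈ Ioo (0:ℝ) Rs, HasDerivAt F (h ρ) ρ := by
      intro ρ hρ
      have hρne : ρ ≠ 0 := hρ.1.ne'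
      have hk := key ρ ⟨hρ.1, hρ.2.le⟩
      have hpw : HasDerivAt (fun x : ℝ => x ^ (m + 2))
          (((m + 2 : ℕ) : ℝ) * ρ ^ (m + 1)) ρ := by
        simpa using hasDerivAt_pow (m + 2) ρ
      have hpw1 : HasDerivAt (fun x : ℝ => x ^ (m + 1))
          (((m + 1 : ℕ) : ℝ) * ρ ^ m) ρ := by
        simpa using hasDerivAt_pow (m + 1) ρ
      have hvsd := hvs ρ ⟨hρ.1.le, hρ.2.le⟩
      have hode := hvsode ρ ⟨hρ.1, hρ.2.le⟩
      have hGρ : ((m + 2 : ℕ) : ℝ) * (vs' ρ + (((m + 2 : ℕ) : ℝ) - 1) / ρ * vs ρ)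
          = ((m + 2 : ℕ) : ℝ) * G ρ := by
        rw [hode]
      have dF := (hpw.mul hk).sub ((hpw1.const_mul ((m + 2 : ℕ) : ℝ)).mul hvsd)
      refine HasDerivAt.congr_deriv dF ?_
      simp only [hh]
      have hvs' : vs' ρ = G ρ - (((m + 2 : ℕ) : ℝ) - 1) / ρ * vs ρ := by
        have := hode
        push_cast at this ⊢
        linarith
      rw [hvs']
      push_cast
      field_simp
      ring
    have hint : IntervalIntegrable h MeasureTheory.volume 0 Rs := by
      apply ContinuousOn.intervalIntegrable
      rwa [uIcc_of_le hRs.le]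
    have hFTC := intervalIntegral.integral_eq_sub_of_hasDeriv_right_of_le hRs.le hFc
      (fun ρ hρ => (hFd ρ hρ).hasDerivWithinAt) hint
    have hFRs : F Rs = Rs ^ (m + 2) * kB := by
      simp [hF, hG, hcsRs, hpsRs, hvsRs]
    have hF0 : F 0 = 0 := by
      simp [hF]
    rw [hcong, hFTC, hFRs, hF0]
    have hm0 : (0:ℝ) ≤ (m:ℝ) := Nat.cast_nonneg m
    have hn1 : ((m:ℝ) + 2 - 1) ≠ 0 := ne_of_gt (by linarith)
    have hRp : Rs ^ (m + 2) ≠ 0 := pow_ne_zero _ hRne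
    push_cast
    field_simp
    ring
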